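/- Let σ ∈ (0, 1/√3] and let m ≥ 1 be an integer. Set a = σ/√(1 − 2σ²) and define u : ℝ → ℝ³ by u(θ) = (a cos(mθ), a sin(mθ), √(1 − a²)). Then, with geodesic curvature κ(θ) = ‖u''(θ) − ⟨u''(θ), u(θ)⟩u(θ)‖/‖u'(θ)‖², one has the exact identity ∫₀^{2π} (1 + σ² κ(θ)²) ‖u'(θ)‖ dθ = 2π m σ (2 − 3σ²)/√(1 − 2σ²). -/

import Mathlib

open Real

lemma hasDerivAt_e3 {f g h : ℝ → ℝ} {f' g' h' : ℝ} {x : ℝ}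
    (hf : HasDerivAt f f' x) (hg : HasDerivAt g g' x) (hh : HasDerivAt h h' x) :
    HasDerivAt (F := EuclideanSpace ℝ (Fin 3)) (fun θ => WithLp.toLp 2 ![f θ, g θ, h θ])
      (WithLp.toLp 2 ![f', g', h']) x := by
  have key : HasDerivAt (fun θ => (![f θ, g θ, h θ] : Fin 3 → ℝ)) ![f', g', h'] x := by
    rw [hasDerivAt_pi]
    intro i
    fin_cases i <;> simp [hf, hg, hh]
  exact (EuclideanSpace.equiv (Fin 3) ℝ).symm.toContinuousLinearMap.hasFDerivAt.comp_hasDerivAt x key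

/-- For `σ ∈ (0, 1/√3]`, an integer `m ≥ 1`, `a = σ/√(1 − 2σ²)` and the `m`-fold
covered latitude circle `u(θ) = (a cos(mθ), a sin(mθ), √(1 − a²))`, the regularized
energy satisfies the exact identity
`∫₀^{2π} (1 + σ² κ(θ)²) ‖u'(θ)‖ dθ = 2π m σ (2 − 3σ²)/√(1 − 2σ²)`,
where `κ(θ) = ‖u''(θ) − ⟨u''(θ), u(θ)⟩u(θ)‖/‖u'(θ)‖²`. -/
theorem energy_exact_identity (σ : ℝ) (hσ : σ ∈ Set.Ioc (0 : ℝ) (1 / Real.sqrt 3))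
    (m : ℕ) (hm : 1 ≤ m) (a : ℝ) (ha : a = σ / Real.sqrt (1 - 2 * σ ^ 2))
    (u : ℝ → EuclideanSpace ℝ (Fin 3))
    (hu : u = fun θ => WithLp.toLp 2 ![a * Real.cos (m * θ), a * Real.sin (m * θ),
      Real.sqrt (1 - a ^ 2)])
    (κ : ℝ → ℝ)
    (hκ : ∀ θ, κ θ =
      ‖deriv (deriv u) θ - (inner ℝ (deriv (deriv u) θ) (u θ) : ℝ) • u θ‖
        / ‖deriv u θ‖ ^ 2) :
    ∫ θ in (0 : ℝ)..(2 * π), (1 + σ ^ 2 * κ θ ^ 2) * ‖deriv u θ‖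
      = 2 * π * m * σ * (2 - 3 * σ ^ 2) / Real.sqrt (1 - 2 * σ ^ 2) := by
  obtain ⟨hσ0, hσ3⟩ := hσ
  have h3 : (0:ℝ) < Real.sqrt 3 := by positivity
  have hσsq : 3 * σ ^ 2 ≤ 1 := by
    have h1 : σ ^ 2 ≤ (1 / Real.sqrt 3) ^ 2 := pow_le_pow_left₀ hσ0.le hσ3 2
    have h2 : (Real.sqrt 3) ^ 2 = 3 := Real.sq_sqrt (by norm_num)
    rw [div_pow, h2] at h1
    linarith
  set s := Real.sqrt (1 - 2 * σ ^ 2) with hs_def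
  have hs2 : s ^ 2 = 1 - 2 * σ ^ 2 := Real.sq_sqrt (by nlinarith)
  have hs0 : 0 < s := Real.sqrt_pos.mpr (by nlinarith)
  have ha0 : 0 < a := by rw [ha]; positivity
  have ham : a * s = σ := by rw [ha]; field_simp
  have ha2 : a ^ 2 * (1 - 2 * σ ^ 2) = σ ^ 2 := by
    rw [← hs2]; nlinarith [ham]
  have ha1 : a ^ 2 ≤ 1 := by nlinarith
  set b := Real.sqrt (1 - a ^ 2) with hb_def
  have hb2 : b ^ 2 = 1 - a ^ 2 := Real.sq_sqrt (by linarith)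
  have hb0 : 0 ≤ b := Real.sqrt_nonneg _
  have hm0 : (0:ℝ) < m := by exact_mod_cast hm
  -- first derivative
  have hu' : deriv u = fun θ => (WithLp.toLp 2 ![-(a*m) * Real.sin (m*θ), (a*m) * Real.cos (m*θ), 0] :
      EuclideanSpace ℝ (Fin 3)) := by
    funext θ
    apply HasDerivAt.deriv
    rw [hu]
    have hmθ : HasDerivAt (fun θ : ℝ => (m:ℝ) * θ) m θ := by
      simpa using (hasDerivAt_id θ).const_mul (m:ℝ)
    have h1 : HasDerivAt (fun θ : ℝ => a * Real.cos (m*θ)) (-(a*m) * Real.sin (m*θ)) θ := by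
      have := ((Real.hasDerivAt_cos ((m:ℝ)*θ)).comp θ hmθ).const_mul a
      exact this.congr_deriv (by ring)
    have h2 : HasDerivAt (fun θ : ℝ => a * Real.sin (m*θ)) ((a*m) * Real.cos (m*θ)) θ := by
      have := ((Real.hasDerivAt_sin ((m:ℝ)*θ)).comp θ hmθ).const_mul a
      exact this.congr_deriv (by ring)
    exact hasDerivAt_e3 h1 h2 (hasDerivAt_const θ _)
  -- second derivative
  have hu'' : deriv (deriv u) = fun θ =>
      (WithLp.toLp 2 ![-(a*m^2) * Real.cos (m*θ), -(a*m^2) * Real.sin (m*θ), 0] :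
      EuclideanSpace ℝ (Fin 3)) := by
    funext θ
    apply HasDerivAt.deriv
    rw [hu']
    have hmθ : HasDerivAt (fun θ : ℝ => (m:ℝ) * θ) m θ := by
      simpa using (hasDerivAt_id θ).const_mul (m:ℝ)
    have h1 : HasDerivAt (fun θ : ℝ => -(a*m) * Real.sin (m*θ)) (-(a*m^2) * Real.cos (m*θ)) θ := by
      have := ((Real.hasDerivAt_sin ((m:ℝ)*θ)).comp θ hmθ).const_mul (-(a*m))
      exact this.congr_deriv (by ring)
    have h2 : HasDerivAt (fun θ : ℝ => (a*m) * Real.cos (m*θ)) (-(a*m^2) * Real.sin (m*θ)) θ := by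
      have := ((Real.hasDerivAt_cos ((m:ℝ)*θ)).comp θ hmθ).const_mul (a*m)
      exact this.congr_deriv (by ring)
    exact hasDerivAt_e3 h1 h2 (hasDerivAt_const θ _)
  -- norm of first derivative
  have hn1 : ∀ θ, ‖deriv u θ‖ = a * m := by
    intro θ
    rw [hu', EuclideanSpace.norm_eq]
    simp only [Fin.sum_univ_three, PiLp.toLp_apply, Matrix.cons_val_zero, Matrix.cons_val_one, Matrix.head_cons,
      Matrix.cons_val_two, Matrix.tail_cons, Real.norm_eq_abs, sq_abs]
    have htrig := Real.sin_sq_add_cos_sq ((m:ℝ)*θ)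
    have key : (-(a*↑m) * Real.sin (↑m*θ)) ^ 2 + ((a*↑m) * Real.cos (↑m*θ)) ^ 2 + (0:ℝ) ^ 2
        = (a*m)^2 := by linear_combination (a^2*(m:ℝ)^2) * htrig
    rw [key, Real.sqrt_sq (by positivity)]
  -- κ is constant
  have hκ' : ∀ θ, κ θ = b / a := by
    intro θ
    have htrig := Real.sin_sq_add_cos_sq ((m:ℝ)*θ)
    have hinner : (inner ℝ (deriv (deriv u) θ) (u θ) : ℝ) = -(a^2*m^2) := by
      rw [hu'', hu]
      simp only [PiLp.inner_apply, PiLp.toLp_apply, RCLike.inner_apply, conj_trivial, Fin.sum_univ_three,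
        Matrix.cons_val_zero, Matrix.cons_val_one, Matrix.head_cons, Matrix.cons_val_two,
        Matrix.tail_cons]
      linear_combination (-(a^2*(m:ℝ)^2)) * htrig
    rw [hκ θ, hn1 θ, hinner, hu'', hu, EuclideanSpace.norm_eq]
    simp only [Fin.sum_univ_three, PiLp.toLp_apply, PiLp.sub_apply, PiLp.smul_apply, smul_eq_mul,
      Matrix.cons_val_zero, Matrix.cons_val_one, Matrix.head_cons, Matrix.cons_val_two,
      Matrix.tail_cons, Real.norm_eq_abs, sq_abs]
    have key : ∀ X : ℝ, X = (a*↑m^2*b)^2 → Real.sqrt X / (a*↑m)^2 = b / a := by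
      intro X hX
      rw [hX, Real.sqrt_sq (by positivity)]
      field_simp
    apply key
    linear_combination (a^2*(m:ℝ)^4*(a^2-1)^2) * htrig + (a^2*(m:ℝ)^4*(a^2-1)) * hb2
  -- conclude
  rw [intervalIntegral.integral_congr (g := fun _ : ℝ => (1 + σ ^ 2 * (b/a) ^ 2) * (a * m))
    (fun θ _ => by rw [hκ' θ, hn1 θ])]
  rw [intervalIntegral.integral_const, smul_eq_mul]
  have e2 : a ^ 2 + σ ^ 2 * b ^ 2 = a ^ 2 * (2 - 3 * σ ^ 2) := by
    rw [hb2]; linear_combination -ha2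
  have final : (1 + σ ^ 2 * (b/a) ^ 2) * (a * m) = a * (2 - 3 * σ ^ 2) * m := by
    have step : (1 : ℝ) + σ ^ 2 * (b/a) ^ 2 = (a ^ 2 + σ ^ 2 * b ^ 2) / a ^ 2 := by
      field_simp
    rw [step, e2]
    field_simp
  rw [final, ← ham]
  field_simp
  ring
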